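/- Let Π be a measure on ℝ with ∫ |y|² dΠ(y) < ∞ and ∫ |y|^{2γ+2} dΠ(y) < ∞ for a natural number γ. Let σ : [0,T] × ℝ → ℝ be bounded by C_σ. Then there is a constant C such that for all (t,x), ∫ | |x + σ(t,x) y|^{2γ+2} − |x|^{2γ+2} − (2γ+2)|x|^{2γ} x σ(t,x) y | dΠ(y) ≤ C (1 + |x|^{2γ}). -/
import Mathlib

open MeasureTheory

lemma taylor2_bound (n : ℕ) (x h : ℝ) :
    |(x + h) ^ (n + 2) - x ^ (n + 2) - ((n + 2 : ℝ) * x ^ (n + 1)) * h|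
      ≤ 2 ^ (n + 2) * ((|x| ^ n + |h| ^ n) * h ^ 2) := by
  have expand := add_pow x h (n + 2)
  rw [show n + 2 + 1 = (n + 1) + 1 + 1 by ring, Finset.sum_range_succ,
    Finset.sum_range_succ] at expand
  have hc1 : (n + 2).choose (n + 1) = n + 2 := Nat.choose_succ_self_right (n + 1)
  have hc2 : (n + 2).choose (n + 2) = 1 := Nat.choose_self (n + 2)
  rw [hc1, hc2, show n + 2 - (n + 1) = 1 by omega, Nat.sub_self] at expand
  have heq : (x + h) ^ (n + 2) - x ^ (n + 2) - ((n + 2 : ℝ) * x ^ (n + 1)) * h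
      = ∑ k ∈ Finset.range (n + 1), x ^ k * h ^ (n + 2 - k) * ((n + 2).choose k : ℝ) := by
    rw [expand]; push_cast; ring
  rw [heq]
  calc |∑ k ∈ Finset.range (n + 1), x ^ k * h ^ (n + 2 - k) * ((n + 2).choose k : ℝ)|
      ≤ ∑ k ∈ Finset.range (n + 1), |x ^ k * h ^ (n + 2 - k) * ((n + 2).choose k : ℝ)| :=
        Finset.abs_sum_le_sum_abs _ _
    _ ≤ ∑ k ∈ Finset.range (n + 1), ((n + 2).choose k : ℝ) * ((|x| ^ n + |h| ^ n) * h ^ 2) := by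
        apply Finset.sum_le_sum
        intro k hk
        have hk' : k ≤ n := Nat.lt_succ_iff.mp (Finset.mem_range.mp hk)
        rw [abs_mul, abs_mul, abs_pow, abs_pow, Nat.abs_cast, mul_comm _ ((n + 2).choose k : ℝ)]
        apply mul_le_mul_of_nonneg_left _ (by positivity)
        have h1 : n + 2 - k = (n - k) + 2 := by omega
        rw [h1, pow_add, sq_abs, ← mul_assoc]
        apply mul_le_mul_of_nonneg_right _ (by positivity)
        rcases le_total |x| |h| with hle | hle
        · calc |x| ^ k * |h| ^ (n - k) ≤ |h| ^ k * |h| ^ (n - k) := by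
                apply mul_le_mul_of_nonneg_right (pow_le_pow_left₀ (abs_nonneg _) hle k) (by positivity)
            _ = |h| ^ n := by rw [← pow_add]; congr 1; omega
            _ ≤ |x| ^ n + |h| ^ n := le_add_of_nonneg_left (by positivity)
        · calc |x| ^ k * |h| ^ (n - k) ≤ |x| ^ k * |x| ^ (n - k) := by
                apply mul_le_mul_of_nonneg_left (pow_le_pow_left₀ (abs_nonneg _) hle _) (by positivity)
            _ = |x| ^ n := by rw [← pow_add]; congr 1; omega
            _ ≤ |x| ^ n + |h| ^ n := le_add_of_nonneg_right (by positivity)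
    _ = (∑ k ∈ Finset.range (n + 1), ((n + 2).choose k : ℝ)) * ((|x| ^ n + |h| ^ n) * h ^ 2) := by
        rw [Finset.sum_mul]
    _ ≤ 2 ^ (n + 2) * ((|x| ^ n + |h| ^ n) * h ^ 2) := by
        apply mul_le_mul_of_nonneg_right _ (by positivity)
        have : ∑ k ∈ Finset.range (n + 1), (n + 2).choose k
            ≤ ∑ k ∈ Finset.range (n + 3), (n + 2).choose k :=
          Finset.sum_le_sum_of_subset (Finset.range_subset_range.mpr (by omega))
        rw [Nat.sum_range_choose] at this
        calc (∑ k ∈ Finset.range (n + 1), ((n + 2).choose k : ℝ))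
            = ((∑ k ∈ Finset.range (n + 1), (n + 2).choose k : ℕ) : ℝ) := by push_cast; rfl
          _ ≤ ((2 ^ (n + 2) : ℕ) : ℝ) := by exact_mod_cast this
          _ = 2 ^ (n + 2) := by push_cast; rfl

theorem stmt_3 (T : ℝ) (γ : ℕ) (μ : Measure ℝ)
    (hμ2 : ∫⁻ y, ENNReal.ofReal (|y| ^ 2) ∂μ < ⊤)
    (hμγ : ∫⁻ y, ENNReal.ofReal (|y| ^ (2 * γ + 2)) ∂μ < ⊤)
    (σ : ℝ → ℝ → ℝ) (Cσ : ℝ) (hσ : ∀ t x, |σ t x| ≤ Cσ) :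
    ∃ C : ℝ, ∀ t ∈ Set.Icc (0 : ℝ) T, ∀ x : ℝ,
      ∫⁻ y, ENNReal.ofReal
          (|(|x + σ t x * y|) ^ (2 * γ + 2) - |x| ^ (2 * γ + 2)
            - ((2 * γ + 2 : ℝ) * |x| ^ (2 * γ) * x) * (σ t x * y)|) ∂μ
        ≤ ENNReal.ofReal (C * (1 + |x| ^ (2 * γ))) := by
  have hCσ : 0 ≤ Cσ := le_trans (abs_nonneg _) (hσ 0 0)
  set A := ∫⁻ y, ENNReal.ofReal (|y| ^ 2) ∂μ with hA
  set B := ∫⁻ y, ENNReal.ofReal (|y| ^ (2 * γ + 2)) ∂μ with hB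
  set K : ℝ := 2 ^ (2 * γ + 2) with hK
  refine ⟨K * Cσ ^ 2 * A.toReal + K * Cσ ^ (2 * γ + 2) * B.toReal, fun t _ x => ?_⟩
  -- pointwise bound
  have hpt : ∀ y : ℝ,
      |(|x + σ t x * y|) ^ (2 * γ + 2) - |x| ^ (2 * γ + 2)
        - ((2 * γ + 2 : ℝ) * |x| ^ (2 * γ) * x) * (σ t x * y)|
      ≤ K * Cσ ^ 2 * |x| ^ (2 * γ) * |y| ^ 2 + K * Cσ ^ (2 * γ + 2) * |y| ^ (2 * γ + 2) := by
    intro y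
    set h := σ t x * y with hh
    have e1 : (|x + h|) ^ (2 * γ + 2) = (x + h) ^ (2 * γ + 2) :=
      (Even.pow_abs (⟨γ + 1, by ring⟩ : Even (2 * γ + 2)) _)
    have e2 : (|x|) ^ (2 * γ + 2) = x ^ (2 * γ + 2) :=
      (Even.pow_abs (⟨γ + 1, by ring⟩ : Even (2 * γ + 2)) _)
    have e3 : (|x|) ^ (2 * γ) = x ^ (2 * γ) :=
      (Even.pow_abs (⟨γ, by ring⟩ : Even (2 * γ)) _)
    have key := taylor2_bound (2 * γ) x h
    have e4 : (2 * γ + 2 : ℝ) * |x| ^ (2 * γ) * x = ((2 * γ : ℕ) + 2 : ℝ) * x ^ (2 * γ + 1) := by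
      rw [e3]; push_cast; ring
    rw [e1, e2, e4]
    refine le_trans key ?_
    have hσy : |h| ≤ Cσ * |y| := by
      rw [hh, abs_mul]
      exact mul_le_mul_of_nonneg_right (hσ t x) (abs_nonneg _)
    have hh2 : h ^ 2 ≤ Cσ ^ 2 * |y| ^ 2 := by
      rw [← sq_abs h, ← mul_pow]
      exact pow_le_pow_left₀ (abs_nonneg _) hσy 2
    have hhn : |h| ^ (2 * γ) * h ^ 2 ≤ Cσ ^ (2 * γ + 2) * |y| ^ (2 * γ + 2) := by
      rw [← sq_abs h, ← pow_add, show 2 * γ + 2 = (2 * γ + 2) from rfl]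
      calc |h| ^ (2 * γ + 2) ≤ (Cσ * |y|) ^ (2 * γ + 2) :=
            pow_le_pow_left₀ (abs_nonneg _) hσy _
        _ = Cσ ^ (2 * γ + 2) * |y| ^ (2 * γ + 2) := mul_pow _ _ _
    have expand : (2:ℝ) ^ (2 * γ + 2) * ((|x| ^ (2 * γ) + |h| ^ (2 * γ)) * h ^ 2)
        = K * (|x| ^ (2 * γ) * h ^ 2) + K * (|h| ^ (2 * γ) * h ^ 2) := by
      rw [hK]; ring
    rw [expand]
    have t1 : K * (|x| ^ (2 * γ) * h ^ 2) ≤ K * Cσ ^ 2 * |x| ^ (2 * γ) * |y| ^ 2 := by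
      have : |x| ^ (2 * γ) * h ^ 2 ≤ |x| ^ (2 * γ) * (Cσ ^ 2 * |y| ^ 2) :=
        mul_le_mul_of_nonneg_left hh2 (by positivity)
      nlinarith [pow_nonneg (abs_nonneg x) (2*γ), sq_nonneg y, hK ▸ (by positivity : (0:ℝ) ≤ K)]
    have t2 : K * (|h| ^ (2 * γ) * h ^ 2) ≤ K * Cσ ^ (2 * γ + 2) * |y| ^ (2 * γ + 2) := by
      have hKpos : (0:ℝ) ≤ K := by rw [hK]; positivity
      calc K * (|h| ^ (2 * γ) * h ^ 2) ≤ K * (Cσ ^ (2 * γ + 2) * |y| ^ (2 * γ + 2)) :=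
            mul_le_mul_of_nonneg_left hhn hKpos
        _ = K * Cσ ^ (2 * γ + 2) * |y| ^ (2 * γ + 2) := by ring
    linarith
  -- integrate the pointwise bound
  set a : ℝ := K * Cσ ^ 2 * |x| ^ (2 * γ) with ha
  set b : ℝ := K * Cσ ^ (2 * γ + 2) with hb
  have hKpos : (0:ℝ) ≤ K := by rw [hK]; positivity
  have hapos : 0 ≤ a := by rw [ha]; positivity
  have hbpos : 0 ≤ b := by rw [hb]; positivity
  calc ∫⁻ y, ENNReal.ofReal
          (|(|x + σ t x * y|) ^ (2 * γ + 2) - |x| ^ (2 * γ + 2)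
            - ((2 * γ + 2 : ℝ) * |x| ^ (2 * γ) * x) * (σ t x * y)|) ∂μ
      ≤ ∫⁻ y, (ENNReal.ofReal a * ENNReal.ofReal (|y| ^ 2)
          + ENNReal.ofReal b * ENNReal.ofReal (|y| ^ (2 * γ + 2))) ∂μ := by
        apply lintegral_mono
        intro y
        dsimp only
        rw [← ENNReal.ofReal_mul hapos, ← ENNReal.ofReal_mul hbpos,
          ← ENNReal.ofReal_add (by positivity) (by positivity)]
        exact ENNReal.ofReal_le_ofReal (hpt y)
    _ = ENNReal.ofReal a * A + ENNReal.ofReal b * B := by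
        rw [lintegral_add_left (by fun_prop), lintegral_const_mul' _ _ ENNReal.ofReal_ne_top,
          lintegral_const_mul' _ _ ENNReal.ofReal_ne_top]
    _ ≤ ENNReal.ofReal ((K * Cσ ^ 2 * A.toReal + K * Cσ ^ (2 * γ + 2) * B.toReal)
          * (1 + |x| ^ (2 * γ))) := by
        rw [← ENNReal.ofReal_toReal hμ2.ne, ← ENNReal.ofReal_toReal hμγ.ne,
          ← ENNReal.ofReal_mul hapos, ← ENNReal.ofReal_mul hbpos,
          ← ENNReal.ofReal_add (by positivity) (by positivity)]
        apply ENNReal.ofReal_le_ofReal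
        have h1 : 0 ≤ A.toReal := ENNReal.toReal_nonneg
        have h2 : 0 ≤ B.toReal := ENNReal.toReal_nonneg
        have h3 : 0 ≤ |x| ^ (2 * γ) := by positivity
        rw [ha, hb]
        simp only [ENNReal.toReal_ofReal h1, ENNReal.toReal_ofReal h2]
        nlinarith [mul_nonneg (mul_nonneg hKpos (by positivity : (0:ℝ) ≤ Cσ^2)) h1,
          mul_nonneg (mul_nonneg hKpos (by positivity : (0:ℝ) ≤ Cσ^(2*γ+2))) h2]
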